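/- arXiv:1103.5251 — 6 statements merged into one kernel-verified Lean document; each statement's English description precedes it below -/
import Mathlib

section
/- In a preabelian category, a pushout of a semi-stable kernel is a semi-stable kernel, and a pullback of a semi-stable cokernel is a semi-stable cokernel. -/
open CategoryTheory CategoryTheory.Limits

universe v u

variable {C : Type u} [Category.{v} C] [Preadditive C] [HasKernels C] [HasCokernels C]

/-- A morphism arises as a kernel of some morphism. -/
def IsKernelMor {X Y : C} (f : X ⟶ Y) : Prop :=
  ∃ (Z : C) (g : Y ⟶ Z) (w : f ≫ g = 0), Nonempty (IsLimit (KernelFork.ofι f w))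

/-- A morphism arises as a cokernel of some morphism. -/
def IsCokernelMor {X Y : C} (f : X ⟶ Y) : Prop :=
  ∃ (W : C) (g : W ⟶ X) (w : g ≫ f = 0), Nonempty (IsColimit (CokernelCofork.ofπ f w))

/-- A semi-stable kernel: a kernel all of whose pushouts are kernels. -/
def SemiStableKernelMor {X Y : C} (f : X ⟶ Y) : Prop :=
  IsKernelMor f ∧ ∀ {X' P : C} (g : X ⟶ X') (h : Y ⟶ P) (i : X' ⟶ P),
    IsPushout f g h i → IsKernelMor i

/-- A semi-stable cokernel: a cokernel all of whose pullbacks are cokernels. -/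
def SemiStableCokernelMor {X Y : C} (f : X ⟶ Y) : Prop :=
  IsCokernelMor f ∧ ∀ {Y' P : C} (g : Y' ⟶ Y) (fst : P ⟶ X) (snd : P ⟶ Y'),
    IsPullback fst snd f g → IsCokernelMor snd

/-- Exactness at the middle object: `im a = ker b`. -/
def ExactAtMor {A B D : C} (a : A ⟶ B) (b : B ⟶ D) : Prop :=
  ∃ w : Abelian.image.ι a ≫ b = 0, Nonempty (IsLimit (KernelFork.ofι (Abelian.image.ι a) w))

/-- A pushout of a semi-stable kernel is a semi-stable kernel; a pullback of a
semi-stable cokernel is a semi-stable cokernel. -/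
theorem stmt_5 :
    (∀ {X Y X' P : C} (f : X ⟶ Y) (g : X ⟶ X') (h : Y ⟶ P) (i : X' ⟶ P),
      SemiStableKernelMor f → IsPushout f g h i → SemiStableKernelMor i) ∧
    (∀ {X Y Y' P : C} (f : X ⟶ Y) (g : Y' ⟶ Y) (fst : P ⟶ X) (snd : P ⟶ Y'),
      SemiStableCokernelMor f → IsPullback fst snd f g → SemiStableCokernelMor snd) := by
  constructor
  · intro X Y X' P f g h i hf sq
    exact ⟨hf.2 g h i sq, fun g2 h2 i2 sq2 => hf.2 _ _ _ (sq.paste_vert sq2)⟩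
  · intro X Y Y' P f g fst snd hf sq
    exact ⟨hf.2 g fst snd sq, fun g2 fst2 snd2 sq2 => hf.2 _ _ _ (sq2.paste_horiz sq)⟩
end

section
/- In a P-semi-abelian category, if a composite g ∘ f is a kernel then f is a kernel; dually, if g ∘ f is a cokernel then g is a cokernel. -/
open CategoryTheory CategoryTheory.Limits

universe v u

variable {C : Type u} [Category.{v} C] [Preadditive C] [HasKernels C] [HasCokernels C]

/-- In a P-semi-abelian category, if `g ∘ f` is a kernel then `f` is a kernel;
dually, if `g ∘ f` is a cokernel then `g` is a cokernel. -/
theorem stmt_7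
    (hP : ∀ {X Y : C} (α : X ⟶ Y),
      Mono (Abelian.coimageImageComparison α) ∧ Epi (Abelian.coimageImageComparison α))
    {X Y Z : C} (f : X ⟶ Y) (g : Y ⟶ Z) :
    (IsKernelMor (f ≫ g) → IsKernelMor f) ∧
    (IsCokernelMor (f ≫ g) → IsCokernelMor g) := by
  constructor
  · rintro ⟨W, u, w, ⟨hL⟩⟩
    have hmono : Mono (f ≫ g) := mono_of_isLimit_fork hL
    set e := Abelian.factorThruImage f with he_def
    set m := Abelian.image.ι f with hm_def
    have hfac : e ≫ m = f := Abelian.image.fac f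
    have hpi : Abelian.coimage.π f ≫ Abelian.coimageImageComparison f = e := by
      simp [Abelian.coimageImageComparison, he_def]
    have hcomp := (hP f).2
    have he : Epi e := by rw [← hpi]; exact epi_comp _ _
    have h0 : m ≫ g ≫ u = 0 := by
      rw [← cancel_epi e, comp_zero, ← Category.assoc, hfac, ← Category.assoc, w]
    obtain ⟨t, ht⟩ := KernelFork.IsLimit.lift' hL (m ≫ g) (by simpa using h0)
    simp only [Fork.ι_ofι] at ht
    have het : e ≫ t = 𝟙 X := by
      rw [← cancel_mono (f ≫ g), Category.id_comp, Category.assoc, ht, ← Category.assoc,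
        hfac]
    have hte : t ≫ e = 𝟙 _ := by
      rw [← cancel_epi e, ← Category.assoc, het, Category.id_comp, Category.comp_id]
    have hie : IsIso e := ⟨t, het, hte⟩
    have h1 : inv e ≫ f = m := by rw [IsIso.inv_comp_eq]; exact hfac.symm
    refine ⟨_, cokernel.π f, cokernel.condition f, ⟨?_⟩⟩
    have hfm : Mono f := by rw [← hfac]; exact mono_comp _ _
    refine KernelFork.IsLimit.ofι f _ (fun s hs => kernel.lift _ s hs ≫ inv e) ?_ ?_
    · intro A s hs
      rw [Category.assoc, h1, hm_def, kernel.lift_ι]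
    · intro A s hs m' hm'
      rw [← cancel_mono f, Category.assoc, h1, hm_def, kernel.lift_ι, hm']
  · rintro ⟨W, u, w, ⟨hL⟩⟩
    have hepi : Epi (f ≫ g) := epi_of_isColimit_cofork hL
    set p := Abelian.coimage.π g with hp_def
    set n := Abelian.factorThruCoimage g with hn_def
    have hfac : p ≫ n = g := Abelian.coimage.fac g
    have hn' : n = Abelian.coimageImageComparison g ≫ Abelian.image.ι g := by
      rw [← cancel_epi p, hfac]
      simp [hp_def]
    have hn : Mono n := by
      rw [hn']
      have := (hP g).1
      exact mono_comp _ _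
    have h0 : (u ≫ f) ≫ p = 0 := by
      rw [← cancel_mono n, zero_comp, Category.assoc, Category.assoc, hfac]
      exact w
    obtain ⟨t, ht⟩ := CokernelCofork.IsColimit.desc' hL (f ≫ p) (by simpa using h0)
    simp only [Cofork.π_ofπ] at ht
    have hnt : t ≫ n = 𝟙 Z := by
      rw [← cancel_epi (f ≫ g), Category.comp_id, ← Category.assoc, ht, Category.assoc,
        hfac]
    have htn : n ≫ t = 𝟙 _ := by
      rw [← cancel_mono n, Category.assoc, hnt, Category.id_comp, Category.comp_id]
    have hin : IsIso n := ⟨t, htn, hnt⟩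
    have h1 : g ≫ inv n = p := by rw [IsIso.comp_inv_eq]; exact hfac.symm
    refine ⟨_, kernel.ι g, kernel.condition g, ⟨?_⟩⟩
    have hge : Epi g := by rw [← hfac]; exact epi_comp _ _
    refine CokernelCofork.IsColimit.ofπ g _ (fun s hs => inv n ≫ cokernel.desc _ s hs) ?_ ?_
    · intro A s hs
      rw [← Category.assoc, h1, hp_def, cokernel.π_desc]
    · intro A s hs m' hm'
      rw [← cancel_epi g, ← Category.assoc, h1, hp_def, cokernel.π_desc, hm']
end

section
/- In a P-semi-abelian category, if f and g are kernels and g ∘ f is defined, then g ∘ f is a kernel; dually, a composite of cokernels is a cokernel. -/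
open CategoryTheory CategoryTheory.Limits

universe v u

variable {C : Type u} [Category.{v} C] [Preadditive C] [HasKernels C] [HasCokernels C]

/-- In a P-semi-abelian category, composites of kernels are kernels and composites of
cokernels are cokernels. -/
theorem stmt_8
    (hP : ∀ {X Y : C} (α : X ⟶ Y),
      Mono (Abelian.coimageImageComparison α) ∧ Epi (Abelian.coimageImageComparison α))
    {X Y Z : C} (f : X ⟶ Y) (g : Y ⟶ Z) :
    (IsKernelMor f → IsKernelMor g → IsKernelMor (f ≫ g)) ∧
    (IsCokernelMor f → IsCokernelMor g → IsCokernelMor (f ≫ g)) := by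
  constructor
  · rintro ⟨V, v, wf, ⟨hf⟩⟩ ⟨U, u, wg, ⟨hg⟩⟩
    have mf : Mono f := mono_of_isLimit_fork hf
    have mg : Mono g := mono_of_isLimit_fork hg
    have ec : Epi (Abelian.coimageImageComparison (f ≫ g)) := (hP (f ≫ g)).2
    let c : X ⟶ Abelian.image (f ≫ g) :=
      Abelian.coimage.π (f ≫ g) ≫ Abelian.coimageImageComparison (f ≫ g)
    have epic : Epi c := epi_comp _ _
    have hck : c ≫ Abelian.image.ι (f ≫ g) = f ≫ g := by
      simp only [c, Category.assoc, Abelian.coimage_image_factorisation]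
    have hku : Abelian.image.ι (f ≫ g) ≫ u = 0 := by
      rw [← cancel_epi c, reassoc_of% hck, Category.assoc, wg, comp_zero]
      simp
    obtain ⟨k', hk'⟩ := KernelFork.IsLimit.lift' hg (Abelian.image.ι (f ≫ g)) hku
    simp only [Fork.ι_ofι] at hk'
    have hck' : c ≫ k' = f := by
      rw [← cancel_mono g, Category.assoc, hk', hck]
    have hk'v : k' ≫ v = 0 := by
      rw [← cancel_epi c, reassoc_of% hck', wf, comp_zero]
    obtain ⟨d, hd⟩ := KernelFork.IsLimit.lift' hf k' hk'v
    simp only [Fork.ι_ofι] at hd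
    have hcd : c ≫ d = 𝟙 X := by
      rw [← cancel_mono f, Category.assoc, hd, hck', Category.id_comp]
    have hdh : d ≫ (f ≫ g) = Abelian.image.ι (f ≫ g) := by
      rw [← Category.assoc, hd, hk']
    refine ⟨cokernel (f ≫ g), cokernel.π (f ≫ g), cokernel.condition (f ≫ g), ⟨?_⟩⟩
    have mh : Mono (f ≫ g) := mono_comp f g
    refine KernelFork.IsLimit.ofι' (f ≫ g) (cokernel.condition (f ≫ g)) (fun {A} s hs => ?_)
    refine ⟨kernel.lift (cokernel.π (f ≫ g)) s hs ≫ d, ?_⟩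
    rw [Category.assoc, hdh]
    exact kernel.lift_ι _ _ _
  · rintro ⟨V, v, wf, ⟨hf⟩⟩ ⟨U, u, wg, ⟨hg⟩⟩
    have ef : Epi f := epi_of_isColimit_cofork hf
    have eg : Epi g := epi_of_isColimit_cofork hg
    have mc : Mono (Abelian.coimageImageComparison (f ≫ g)) := (hP (f ≫ g)).1
    let c : Abelian.coimage (f ≫ g) ⟶ Z :=
      Abelian.coimageImageComparison (f ≫ g) ≫ Abelian.image.ι (f ≫ g)
    have monoc : Mono c := mono_comp _ _
    have hpc : Abelian.coimage.π (f ≫ g) ≫ c = f ≫ g := by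
      simp only [c, Abelian.coimage_image_factorisation]
    have hvp : v ≫ Abelian.coimage.π (f ≫ g) = 0 := by
      rw [← cancel_mono c, Category.assoc, hpc, ← Category.assoc, wf, zero_comp]
      simp
    obtain ⟨f', hf'⟩ := CokernelCofork.IsColimit.desc' hf (Abelian.coimage.π (f ≫ g)) hvp
    simp only [Cofork.π_ofπ] at hf'
    have hf'c : f' ≫ c = g := by
      rw [← cancel_epi f, ← Category.assoc, hf', hpc]
    have huf' : u ≫ f' = 0 := by
      rw [← cancel_mono c, Category.assoc, hf'c, wg, zero_comp]
    obtain ⟨d, hd⟩ := CokernelCofork.IsColimit.desc' hg f' huf'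
    simp only [Cofork.π_ofπ] at hd
    have hdc : d ≫ c = 𝟙 Z := by
      rw [← cancel_epi g, ← Category.assoc, hd, hf'c, Category.comp_id]
    have hhd : (f ≫ g) ≫ d = Abelian.coimage.π (f ≫ g) := by
      rw [Category.assoc, hd, hf']
    refine ⟨kernel (f ≫ g), kernel.ι (f ≫ g), kernel.condition (f ≫ g), ⟨?_⟩⟩
    have eh : Epi (f ≫ g) := epi_comp f g
    refine CokernelCofork.IsColimit.ofπ' (f ≫ g) (kernel.condition (f ≫ g)) (fun {A} s hs => ?_)
    refine ⟨d ≫ cokernel.desc (kernel.ι (f ≫ g)) s hs, ?_⟩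
    rw [← Category.assoc, hhd]
    exact cokernel.π_desc _ _ _
end

section
/- In a P-semi-abelian category, if g ∘ f is strict and g is a monomorphism, then f is strict. -/
open CategoryTheory CategoryTheory.Limits

universe v u

variable {C : Type u} [Category.{v} C] [Preadditive C] [HasKernels C] [HasCokernels C]

/-- In a P-semi-abelian category, if `g ∘ f` is strict and `g` is a monomorphism,
then `f` is strict. -/
theorem stmt_9
    (hP : ∀ {X Y : C} (α : X ⟶ Y),
      Mono (Abelian.coimageImageComparison α) ∧ Epi (Abelian.coimageImageComparison α))
    {X Y Z : C} (f : X ⟶ Y) (g : Y ⟶ Z)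
    (hstrict : IsIso (Abelian.coimageImageComparison (f ≫ g))) (hg : Mono g) :
    IsIso (Abelian.coimageImageComparison f) := by
  -- map u : im f ⟶ im (f ≫ g)
  have hu0 : Abelian.image.ι f ≫ g ≫ cokernel.π (f ≫ g) = 0 := by
    have hd : g ≫ cokernel.π (f ≫ g) =
        cokernel.π f ≫ cokernel.desc f (g ≫ cokernel.π (f ≫ g))
          (by rw [← Category.assoc, cokernel.condition]) :=
      (cokernel.π_desc _ _ _).symm
    rw [hd, ← Category.assoc, kernel.condition, zero_comp]
  let u : Abelian.image f ⟶ Abelian.image (f ≫ g) :=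
    kernel.lift (cokernel.π (f ≫ g)) (Abelian.image.ι f ≫ g) (by simpa using hu0)
  have hu : u ≫ Abelian.image.ι (f ≫ g) = Abelian.image.ι f ≫ g := by
    simp [u, Abelian.image.ι]
  -- maps between coimages
  have hwk : kernel.ι f ≫ Abelian.coimage.π (f ≫ g) = 0 := by
    have : (kernel.lift (f ≫ g) (kernel.ι f) (by simp) : kernel f ⟶ kernel (f ≫ g)) ≫
        kernel.ι (f ≫ g) = kernel.ι f := by simp
    rw [← this, Category.assoc]
    simp [Abelian.coimage.π]
  let w : Abelian.coimage f ⟶ Abelian.coimage (f ≫ g) :=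
    cokernel.desc (kernel.ι f) (Abelian.coimage.π (f ≫ g)) hwk
  have hw : Abelian.coimage.π f ≫ w = Abelian.coimage.π (f ≫ g) := by
    simp [w, Abelian.coimage.π]
  have hvk : kernel.ι (f ≫ g) ≫ Abelian.coimage.π f = 0 := by
    have hk : kernel.ι (f ≫ g) ≫ f = 0 := by
      rw [← cancel_mono g, Category.assoc, kernel.condition, zero_comp]
    have : (kernel.lift f (kernel.ι (f ≫ g)) hk) ≫ kernel.ι f = kernel.ι (f ≫ g) := by simp
    rw [← this, Category.assoc]
    simp [Abelian.coimage.π]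
  let v : Abelian.coimage (f ≫ g) ⟶ Abelian.coimage f :=
    cokernel.desc (kernel.ι (f ≫ g)) (Abelian.coimage.π f) hvk
  have hv : Abelian.coimage.π (f ≫ g) ≫ v = Abelian.coimage.π f := by
    simp [v, Abelian.coimage.π]
  have hwv : w ≫ v = 𝟙 _ := by
    rw [← cancel_epi (Abelian.coimage.π f), ← Category.assoc, hw, hv, Category.comp_id]
  -- key commuting square
  have hsq : Abelian.coimageImageComparison f ≫ u =
      w ≫ Abelian.coimageImageComparison (f ≫ g) := by
    rw [← cancel_epi (Abelian.coimage.π f), ← cancel_mono (Abelian.image.ι (f ≫ g))]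
    simp only [Category.assoc, hu, Abelian.coimage_image_factorisation_assoc]
    conv_rhs => rw [← Category.assoc, hw]
    rw [Abelian.coimage_image_factorisation]
  -- left inverse of the comparison
  let L : Abelian.image f ⟶ Abelian.coimage f :=
    u ≫ inv (Abelian.coimageImageComparison (f ≫ g)) ≫ v
  have hL : Abelian.coimageImageComparison f ≫ L = 𝟙 _ := by
    simp only [L, ← Category.assoc, hsq]
    simp [hwv]
  have hepi : Epi (Abelian.coimageImageComparison f) := (hP f).2
  refine ⟨L, hL, ?_⟩
  rw [← cancel_epi (Abelian.coimageImageComparison f), ← Category.assoc, hL,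
    Category.id_comp, Category.comp_id]
end

section
/- (Two-Square Lemma, existence part) Given a commutative diagram with exact rows A →ψ B →φ C, A' →ψ' B' →φ' C' and vertical morphisms α : A → A', β : B → B', γ : C → C' in a preabelian category, let (Q', σ : Q' → C, σ' : Q' → B') be the pullback of γ and φ', and let (Q, τ : B → Q, τ' : A' → Q) be the pushout of ψ and α. Then: (i) there exists a unique θ : Q → B' with θ ∘ τ = β and θ ∘ τ' = ψ'; (ii) there exists a unique ρ : B → Q' with σ ∘ ρ = φ and σ' ∘ ρ = β; (iii) there exists a unique η : Q → Q' with η ∘ τ = ρ, σ' ∘ η = θ, and σ ∘ η ∘ τ' = 0. -/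
open CategoryTheory CategoryTheory.Limits

universe v u

variable {C : Type u} [Category.{v} C] [Preadditive C] [HasKernels C] [HasCokernels C]

section TwoSquare

variable {A B D A' B' D' Q Q' : C}
variable {ψ : A ⟶ B} {φ : B ⟶ D} {α : A ⟶ A'} {β : B ⟶ B'} {γ : D ⟶ D'}
variable {ψ' : A' ⟶ B'} {φ' : B' ⟶ D'}
variable {σ : Q' ⟶ D} {σ' : Q' ⟶ B'} {τ : B ⟶ Q} {τ' : A' ⟶ Q}

/-- Two-Square Lemma, existence part: given the commutative diagram with exact rows, the
pullback `(Q', σ, σ')` of `(γ, φ')` and the pushout `(Q, τ, τ')` of `(ψ, α)`, there exist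
unique `θ : Q ⟶ B'`, `ρ : B ⟶ Q'` and `η : Q ⟶ Q'` with the stated properties. -/
theorem stmt_11
    (hc₁ : ψ ≫ β = α ≫ ψ') (hc₂ : φ ≫ γ = β ≫ φ')
    (hrow₁ : ExactAtMor ψ φ) (hrow₂ : ExactAtMor ψ' φ')
    (hpb : IsPullback σ σ' γ φ') (hpo : IsPushout ψ α τ τ') :
    (∃! θ : Q ⟶ B', τ ≫ θ = β ∧ τ' ≫ θ = ψ') ∧
    (∃! ρ : B ⟶ Q', ρ ≫ σ = φ ∧ ρ ≫ σ' = β) ∧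
    (∀ (θ : Q ⟶ B') (ρ : B ⟶ Q'),
      τ ≫ θ = β → τ' ≫ θ = ψ' → ρ ≫ σ = φ → ρ ≫ σ' = β →
        ∃! η : Q ⟶ Q', τ ≫ η = ρ ∧ η ≫ σ' = θ ∧ τ' ≫ η ≫ σ = 0) := by
  obtain ⟨w₁, -⟩ := hrow₁
  obtain ⟨w₂, -⟩ := hrow₂
  have hψφ : ψ ≫ φ = 0 := by
    rw [← Abelian.image.fac ψ, Category.assoc, w₁, Limits.comp_zero]
  have hψ'φ' : ψ' ≫ φ' = 0 := by
    rw [← Abelian.image.fac ψ', Category.assoc, w₂, Limits.comp_zero]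
  refine ⟨⟨hpo.desc β ψ' hc₁, ⟨hpo.inl_desc _ _ _, hpo.inr_desc _ _ _⟩, ?_⟩,
    ⟨hpb.lift φ β hc₂, ⟨hpb.lift_fst _ _ _, hpb.lift_snd _ _ _⟩, ?_⟩, ?_⟩
  · rintro θ ⟨h1, h2⟩
    apply hpo.hom_ext <;> simp [h1, h2, hpo.inl_desc, hpo.inr_desc]
  · rintro ρ ⟨h1, h2⟩
    apply hpb.hom_ext <;> simp [h1, h2, hpb.lift_fst, hpb.lift_snd]
  · intro θ ρ hθ1 hθ2 hρ1 hρ2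
    have hg0 : (0 : A' ⟶ D) ≫ γ = ψ' ≫ φ' := by rw [hψ'φ', Limits.zero_comp]
    set g : A' ⟶ Q' := hpb.lift 0 ψ' hg0 with hg
    have hgσ : g ≫ σ = 0 := hpb.lift_fst _ _ _
    have hgσ' : g ≫ σ' = ψ' := hpb.lift_snd _ _ _
    have hcomm : ψ ≫ ρ = α ≫ g := by
      apply hpb.hom_ext
      · rw [Category.assoc, hρ1, hψφ, Category.assoc, hgσ, Limits.comp_zero]
      · rw [Category.assoc, hρ2, hc₁, Category.assoc, hgσ']
    refine ⟨hpo.desc ρ g hcomm, ⟨hpo.inl_desc _ _ _, ?_, ?_⟩, ?_⟩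
    · apply hpo.hom_ext
      · rw [← Category.assoc, hpo.inl_desc, hρ2, hθ1]
      · rw [← Category.assoc, hpo.inr_desc, hgσ', hθ2]
    · rw [hpo.inr_desc_assoc, hgσ]
    · rintro η ⟨e1, e2, e3⟩
      apply hpo.hom_ext
      · rw [hpo.inl_desc, e1]
      · rw [hpo.inr_desc]
        apply hpb.hom_ext
        · rw [Category.assoc, e3, hgσ]
        · rw [Category.assoc, e2, hθ2, hgσ']
end TwoSquare
end

section
/- Given a commutative diagram in a preabelian category with morphisms β : B → B', γ : C → C', φ : B → C, and a bottom row A' →ψ' B' →φ' C' exact at B', if the square φ' ∘ β = γ ∘ φ is a pullback, then there is a unique morphism ψ : A' → B such that β ∘ ψ = ψ' and φ ∘ ψ = 0. If moreover the canonical morphism ψ̄' : coim ψ' → im ψ' is an epimorphism, then the sequence A' →ψ B →φ C is exact at B. -/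
open CategoryTheory CategoryTheory.Limits

universe v u

variable {C : Type u} [Category.{v} C] [Preadditive C] [HasKernels C] [HasCokernels C]

/-- Preabelian version of Lemma 1 of Fay–Hardie–Hilton: given a pullback square
`φ' ∘ β = γ ∘ φ` over an exact bottom row, there is a unique `ψ` with `β ∘ ψ = ψ'` and
`φ ∘ ψ = 0`; if moreover `ψ̄'` is epic, the induced top row is exact. -/
theorem stmt_14 {A' B B' D D' : C} (φ : B ⟶ D) (β : B ⟶ B') (γ : D ⟶ D')
    (ψ' : A' ⟶ B') (φ' : B' ⟶ D')
    (hpb : IsPullback φ β γ φ')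
    (hex : ExactAtMor ψ' φ') :
    (∃! ψ : A' ⟶ B, ψ ≫ β = ψ' ∧ ψ ≫ φ = 0) ∧
    (Epi (Abelian.coimageImageComparison ψ') →
      ∀ ψ : A' ⟶ B, ψ ≫ β = ψ' → ψ ≫ φ = 0 → ExactAtMor ψ φ) := by
  obtain ⟨wex, ⟨hlim⟩⟩ := hex
  have wψ' : ψ' ≫ φ' = 0 := by
    have : ψ' = Abelian.coimage.π ψ' ≫ Abelian.coimageImageComparison ψ' ≫ Abelian.image.ι ψ' :=
      (Abelian.coimage_image_factorisation ψ').symm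
    rw [this, Category.assoc, Category.assoc, wex, comp_zero, comp_zero]
  -- the canonical lift
  have hcomm : (0 : A' ⟶ D) ≫ γ = ψ' ≫ φ' := by simp [wψ']
  refine ⟨⟨hpb.lift 0 ψ' hcomm, ⟨hpb.lift_snd _ _ _, hpb.lift_fst _ _ _⟩, ?_⟩, ?_⟩
  · rintro ψ ⟨h1, h2⟩
    apply hpb.hom_ext
    · rw [h2, hpb.lift_fst]
    · rw [h1, hpb.lift_snd]
  · intro hepi ψ hβ hφ
    -- kernel of φ
    set k : kernel φ ⟶ B := kernel.ι φ with hk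
    -- (k ≫ β) is a kernel of φ'
    have wkβ : (k ≫ β) ≫ φ' = 0 := by
      rw [Category.assoc, ← hpb.w]
      simp [hk]
    have hlim' : IsLimit (KernelFork.ofι (k ≫ β) wkβ) := by
      refine KernelFork.IsLimit.ofι _ _
        (fun g hg => kernel.lift φ (hpb.lift 0 g (by simp [hg])) (hpb.lift_fst _ _ _))
        (fun g hg => ?_) (fun g hg m hm => ?_)
      · rw [← Category.assoc, kernel.lift_ι, hpb.lift_snd]
      · rw [← cancel_mono k]
        apply hpb.hom_ext
        · simp [hk]
        · simp only [hk] at hm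
          simp [hk, hm, kernel.lift_ι_assoc, hpb.lift_snd]
    -- the comparison iso between the two kernels of φ'
    let e := IsLimit.conePointUniqueUpToIso hlim hlim'
    have he : e.hom ≫ (k ≫ β) = Abelian.image.ι ψ' := by
      have := IsLimit.conePointUniqueUpToIso_hom_comp hlim hlim' WalkingParallelPair.zero
      simpa using this
    have hmono : Mono (k ≫ β) := by
      have h2 : e.inv ≫ Abelian.image.ι ψ' = k ≫ β := by
        rw [Iso.inv_comp_eq]; exact he.symm
      have h3 : Mono (e.inv ≫ Abelian.image.ι ψ') := mono_comp _ _
      rwa [h2] at h3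
    -- the factorization of ψ through kernel φ
    let u : A' ⟶ kernel φ := kernel.lift φ ψ hφ
    have hu : u ≫ k = ψ := kernel.lift_ι _ _ _
    have hu2 : u = Abelian.coimage.π ψ' ≫ Abelian.coimageImageComparison ψ' ≫ e.hom := by
      rw [← cancel_mono (k ≫ β)]
      rw [← Category.assoc, hu, hβ]
      rw [Category.assoc, Category.assoc, he]
      exact (Abelian.coimage_image_factorisation ψ').symm
    have huepi : Epi u := by
      rw [hu2]
      exact epi_comp _ _
    -- key: kernel φ is contained in image ψ
    have hkey : k ≫ cokernel.π ψ = 0 := by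
      rw [← cancel_epi u, ← Category.assoc, hu]
      simp
    have w : Abelian.image.ι ψ ≫ φ = 0 := by
      have hφfac : φ = cokernel.π ψ ≫ cokernel.desc ψ φ hφ := (cokernel.π_desc _ _ _).symm
      rw [hφfac, ← Category.assoc, kernel.condition, zero_comp]
    refine ⟨w, ⟨?_⟩⟩
    refine KernelFork.IsLimit.ofι _ _
      (fun g hg => kernel.lift (cokernel.π ψ) g ?_)
      (fun g hg => kernel.lift_ι _ _ _)
      (fun g hg m hm => ?_)
    · have : g = kernel.lift φ g hg ≫ k := (kernel.lift_ι _ _ _).symm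
      rw [this, Category.assoc, hkey, comp_zero]
    · rw [← cancel_mono (Abelian.image.ι ψ)]
      simp only [Abelian.image.ι] at *
      rw [hm, kernel.lift_ι]
end
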